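/- Let G = (V,E) be a locally finite graph, let A ⊆ V, let p > 0, and let μ₀ be a mass distribution on G. Let N_p^full(G, A, μ₀) denote the minimum number of toppling moves needed to transport mass p outside of A when every toppling move is required to topple all the mass at the chosen vertex (i.e., m_i = μ_{i−1}(v_i) at every step). Then N_p(G, A, μ₀) = N_p^full(G, A, μ₀); that is, restricting to full topplings does not change the minimum number of toppling moves. -/

import Mathlib

open scoped Classical ENNReal

noncomputable section

variable {V : Type*}

/-- A mass distribution: a nonnegative, finitely supported function on the vertices. -/
def IsMassDist (μ : V → ℝ) : Prop :=
  (∀ v, 0 ≤ μ v) ∧ (Function.support μ).Finite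

/-- The unit point mass at a vertex `o`. -/
def pointMass (o : V) : V → ℝ := fun u => if u = o then 1 else 0

/-- The result of toppling mass `m` at the vertex `v`: remove mass `m` from `v` and
distribute it equally among the neighbors of `v`. -/
def topple (G : SimpleGraph V) [G.LocallyFinite] (μ : V → ℝ) (v : V) (m : ℝ) : V → ℝ :=
  fun u => μ u - (if u = v then m else 0) + (if G.Adj v u then m / (G.degree v : ℝ) else 0)

/-- `ToppleSeq G μ₀ t μ₁` : there is a sequence of `t` valid toppling moves
taking `μ₀` to `μ₁`. -/
def ToppleSeq (G : SimpleGraph V) [G.LocallyFinite] (μ₀ : V → ℝ) (t : ℕ) (μ₁ : V → ℝ) : Prop :=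
  ∃ μs : ℕ → V → ℝ, μs 0 = μ₀ ∧ μs t = μ₁ ∧
    ∀ i < t, ∃ v m, 0 < m ∧ m ≤ μs i v ∧ μs (i + 1) = topple G (μs i) v m

/-- `CanTransport G A p μ₀ t` : starting from `μ₀` there are `t` toppling moves after which
the total mass outside of `A` is at least `p`. -/
def CanTransport (G : SimpleGraph V) [G.LocallyFinite] (A : Set V) (p : ℝ)
    (μ₀ : V → ℝ) (t : ℕ) : Prop :=
  ∃ μ₁ : V → ℝ, ToppleSeq G μ₀ t μ₁ ∧ p ≤ ∑' v : {v : V // v ∉ A}, μ₁ v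

/-- The open ball of radius `n` around `o` in the graph distance. -/
def gball (G : SimpleGraph V) (o : V) (n : ℕ) : Set V := {u | G.dist o u < n}


/-- `minTopples G A p μ₀` : the minimum number of toppling moves needed to transport mass `p`
outside of the set `A`, starting from the mass distribution `μ₀` (with value `⊤` if this is
impossible). -/
def minTopples (G : SimpleGraph V) [G.LocallyFinite] (A : Set V) (p : ℝ)
    (μ₀ : V → ℝ) : ℕ∞ :=
  sInf {n : ℕ∞ | ∃ t : ℕ, n = (t : ℕ∞) ∧ CanTransport G A p μ₀ t}

/-- `CanTransportFull G A p μ₀ t` : starting from `μ₀` there are `t` full toppling moves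
(each toppling all of the mass at the chosen vertex) after which the total mass outside of `A`
is at least `p`. -/
def CanTransportFull (G : SimpleGraph V) [G.LocallyFinite] (A : Set V) (p : ℝ)
    (μ₀ : V → ℝ) (t : ℕ) : Prop :=
  ∃ μs : ℕ → V → ℝ, μs 0 = μ₀ ∧
    (∀ i < t, ∃ v, 0 < μs i v ∧ μs (i + 1) = topple G (μs i) v (μs i v)) ∧
    p ≤ ∑' v : {v : V // v ∉ A}, μs t v

/-- The minimum number of full toppling moves needed to transport mass `p` outside of `A`. -/
def minTopplesFull (G : SimpleGraph V) [G.LocallyFinite] (A : Set V) (p : ℝ)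
    (μ₀ : V → ℝ) : ℕ∞ :=
  sInf {n : ℕ∞ | ∃ t : ℕ, n = (t : ℕ∞) ∧ CanTransportFull G A p μ₀ t}

section Helpers

variable (G : SimpleGraph V) [G.LocallyFinite] (A : Set V)

def massOut (μ : V → ℝ) : ℝ := ∑' v : {v : V // v ∉ A}, μ v

def eW (v u : V) : ℝ :=
  (if G.Adj v u then ((G.degree v : ℝ))⁻¹ else 0) - (if u = v then 1 else 0)

lemma topple_eq_add (μ : V → ℝ) (v : V) (m : ℝ) (u : V) :
    topple G μ v m u = μ u + m * eW G v u := by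
  simp only [topple, eW, mul_sub, mul_ite, mul_one, mul_zero, div_eq_mul_inv, mul_comm]
  ring

lemma topple_zero (μ : V → ℝ) (v : V) : topple G μ v 0 = μ := by
  funext u; simp [topple]

lemma topple_nonneg {μ : V → ℝ} (hμ : ∀ x, 0 ≤ μ x) {v : V} {m : ℝ}
    (hm : 0 ≤ m) (hmv : m ≤ μ v) (u : V) : 0 ≤ topple G μ v m u := by
  rcases eq_or_ne u v with rfl | h
  · simp [topple, G.irrefl]
    linarith
  · simp only [topple, if_neg h]
    have h2 : 0 ≤ (if G.Adj v u then m / (G.degree v : ℝ) else 0) := by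
      split
      · positivity
      · exact le_refl 0
    have := hμ u
    linarith

lemma topple_support {μ : V → ℝ} (hμ : (Function.support μ).Finite) (v : V) (m : ℝ) :
    (Function.support (topple G μ v m)).Finite := by
  apply Set.Finite.subset (hμ.union (insert v (G.neighborFinset v) : Finset V).finite_toSet)
  intro u hu
  by_contra hc
  simp only [Set.mem_union, Function.mem_support, Finset.coe_insert, Set.mem_insert_iff,
    Finset.mem_coe, SimpleGraph.mem_neighborFinset, not_or] at hc
  obtain ⟨h1, h2, h3⟩ := hc
  simp [topple, h1, h2, h3] at hu

lemma massOut_eq_sum {μ : V → ℝ} {s : Finset V} (hs : ∀ u ∉ s, μ u = 0) :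
    massOut A μ = ∑ u ∈ s, if u ∈ A then 0 else μ u := by
  rw [massOut, tsum_eq_sum (s := s.subtype (· ∉ A)) ?_]
  · rw [Finset.sum_subtype_eq_sum_filter, Finset.sum_filter]
    refine Finset.sum_congr rfl fun u _ => ?_
    by_cases h : u ∈ A <;> simp [h]
  · intro b hb
    refine hs b ?_
    simpa [Finset.mem_subtype] using hb

def inw (v : V) : ℝ := ∑ u ∈ G.neighborFinset v, if u ∈ A then ((G.degree v : ℝ))⁻¹ else 0

def outw (v : V) : ℝ := ∑ u ∈ G.neighborFinset v, if u ∈ A then 0 else ((G.degree v : ℝ))⁻¹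

lemma inw_nonneg (v : V) : 0 ≤ inw G A v :=
  Finset.sum_nonneg fun u _ => by split <;> positivity

lemma outw_nonneg (v : V) : 0 ≤ outw G A v :=
  Finset.sum_nonneg fun u _ => by split <;> positivity

lemma inw_add_outw_le_one (v : V) : inw G A v + outw G A v ≤ 1 := by
  rw [inw, outw, ← Finset.sum_add_distrib]
  have h : ∀ u ∈ G.neighborFinset v,
      ((if u ∈ A then ((G.degree v : ℝ))⁻¹ else 0) + (if u ∈ A then 0 else ((G.degree v : ℝ))⁻¹))
        = ((G.degree v : ℝ))⁻¹ := fun u _ => by by_cases h : u ∈ A <;> simp [h]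
  rw [Finset.sum_congr rfl h, Finset.sum_const, G.card_neighborFinset_eq_degree, nsmul_eq_mul]
  rcases Nat.eq_zero_or_pos (G.degree v) with h0 | h0
  · simp [h0]
  · have : (0:ℝ) < (G.degree v : ℝ) := by exact_mod_cast h0
    rw [mul_inv_cancel₀ this.ne']

lemma massOut_topple {μ : V → ℝ} (hμ : (Function.support μ).Finite) (v : V) (m : ℝ) :
    massOut A (topple G μ v m)
      = massOut A μ + (m * outw G A v - (if v ∈ A then 0 else m)) := by
  set s : Finset V := hμ.toFinset ∪ insert v (G.neighborFinset v) with hsdef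
  have hv : v ∈ s := by simp [hsdef]
  have hnb : G.neighborFinset v ⊆ s := fun u hu => by simp [hsdef, hu]
  have h0 : ∀ u ∉ s, μ u = 0 := by
    intro u hu
    by_contra hc
    exact hu (by simp [hsdef, Function.mem_support, hc])
  have h0' : ∀ u ∉ s, topple G μ v m u = 0 := by
    intro u hu
    have h1 : μ u = 0 := h0 u hu
    have h2 : u ≠ v := fun h => hu (h ▸ hv)
    have h3 : ¬ G.Adj v u := fun h => hu (hnb (by rw [SimpleGraph.mem_neighborFinset]; exact h))
    simp [topple, h1, h2, h3]
  rw [massOut_eq_sum (A := A) h0', massOut_eq_sum (A := A) h0]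
  have h1 : ∀ u ∈ s, (if u ∈ A then (0:ℝ) else topple G μ v m u)
      = (if u ∈ A then 0 else μ u)
        + (if u ∈ A then 0 else (if G.Adj v u then m / (G.degree v : ℝ) else 0))
        - (if u ∈ A then 0 else (if u = v then m else 0)) := by
    intro u _
    by_cases h : u ∈ A
    · simp [h]
    · simp only [h, if_false, topple]; ring
  rw [Finset.sum_congr rfl h1]
  rw [Finset.sum_sub_distrib, Finset.sum_add_distrib]
  have h2 : (∑ u ∈ s, if u ∈ A then (0:ℝ) else (if G.Adj v u then m / (G.degree v : ℝ) else 0))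
      = m * outw G A v := by
    rw [← Finset.sum_subset hnb (by
      intro x _ hx
      have : ¬ G.Adj v x := by simpa [SimpleGraph.mem_neighborFinset, SimpleGraph.adj_comm] using hx
      simp [this])]
    rw [outw, Finset.mul_sum]
    refine Finset.sum_congr rfl fun u hu => ?_
    have : G.Adj v u := by simpa [SimpleGraph.mem_neighborFinset, SimpleGraph.adj_comm] using hu
    by_cases h : u ∈ A <;> simp [h, this, div_eq_mul_inv]
  have h3 : (∑ u ∈ s, if u ∈ A then (0:ℝ) else (if u = v then m else 0))
      = (if v ∈ A then 0 else m) := by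
    rw [Finset.sum_eq_single_of_mem v hv (fun u _ hne => by by_cases h : u ∈ A <;> simp [h, hne])]
    simp
  rw [h2, h3]
  ring

lemma tot_update {ρ : V → ℝ} (hρ : (Function.support ρ).Finite) (v : V) (a b : ℝ) :
    (∑' x, (ρ x + (if G.Adj v x then (if x ∈ A then a / (G.degree v : ℝ) else 0) else 0)
        - (if x = v then b else 0)))
      = (∑' x, ρ x) + (a * inw G A v - b) := by
  set s : Finset V := hρ.toFinset ∪ insert v (G.neighborFinset v) with hsdef
  have hv : v ∈ s := by simp [hsdef]
  have hnb : G.neighborFinset v ⊆ s := fun u hu => by simp [hsdef, hu]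
  have h0 : ∀ u ∉ s, ρ u = 0 := by
    intro u hu
    by_contra hc
    exact hu (by simp [hsdef, Function.mem_support, hc])
  rw [tsum_eq_sum (s := s) (by
    intro u hu
    have h2 : u ≠ v := fun h => hu (h ▸ hv)
    have h3 : ¬ G.Adj v u := fun h => hu (hnb (by rw [SimpleGraph.mem_neighborFinset]; exact h))
    simp [h0 u hu, h2, h3])]
  rw [tsum_eq_sum (s := s) (fun u hu => h0 u hu)]
  rw [Finset.sum_sub_distrib, Finset.sum_add_distrib]
  have h2 : (∑ x ∈ s, if G.Adj v x then (if x ∈ A then a / (G.degree v : ℝ) else 0) else 0)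
      = a * inw G A v := by
    rw [← Finset.sum_subset hnb (by
      intro x _ hx
      have : ¬ G.Adj v x := by simpa [SimpleGraph.mem_neighborFinset, SimpleGraph.adj_comm] using hx
      simp [this])]
    rw [inw, Finset.mul_sum]
    refine Finset.sum_congr rfl fun u hu => ?_
    have : G.Adj v u := by simpa [SimpleGraph.mem_neighborFinset, SimpleGraph.adj_comm] using hu
    by_cases h : u ∈ A <;> simp [h, this, div_eq_mul_inv]
  have h3 : (∑ x ∈ s, if x = v then b else 0) = b := by
    rw [Finset.sum_eq_single_of_mem v hv (fun u _ hne => by simp [hne])]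
    simp
  rw [h2, h3]
  ring

lemma L_update (c : V → ℝ) (v : V) (a : ℝ) (u : V) :
    ((∑ x ∈ G.neighborFinset u, (if x = v then c v + a else c x) / (G.degree x : ℝ))
        - (if u = v then c v + a else c u))
      = ((∑ x ∈ G.neighborFinset u, c x / (G.degree x : ℝ)) - c u) + a * eW G v u := by
  have h1 : ∀ x ∈ G.neighborFinset u, (if x = v then c v + a else c x) / (G.degree x : ℝ)
      = c x / (G.degree x : ℝ) + (if x = v then a / (G.degree v : ℝ) else 0) := by
    intro x _
    by_cases h : x = v
    · subst h; simp [add_div]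
    · simp [h]
  rw [Finset.sum_congr rfl h1, Finset.sum_add_distrib, Finset.sum_ite_eq' (G.neighborFinset u) v
    (fun _ => a / (G.degree v : ℝ))]
  simp only [SimpleGraph.mem_neighborFinset]
  rw [eW]
  by_cases hadj : G.Adj u v
  · have hne : ¬ (u = v) := fun h => (h ▸ hadj).ne rfl
    simp only [hadj, if_pos, hadj.symm, if_true, hne, if_false, div_eq_mul_inv]
    ring
  · have hadj' : ¬ G.Adj v u := fun h => hadj h.symm
    by_cases huv : u = v
    · subst huv; simp [hadj', G.irrefl]; ring
    · simp [hadj, hadj', huv]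

end Helpers

section Chain

def Chain (R : (V → ℝ) → (V → ℝ) → Prop) (μ₀ : V → ℝ) (t : ℕ) (μ₁ : V → ℝ) : Prop :=
  ∃ μs : ℕ → V → ℝ, μs 0 = μ₀ ∧ μs t = μ₁ ∧ ∀ i < t, R (μs i) (μs (i + 1))

lemma chain_zero {R : (V → ℝ) → (V → ℝ) → Prop} {μ μ' : V → ℝ} :
    Chain R μ 0 μ' ↔ μ = μ' := by
  constructor
  · rintro ⟨μs, h0, h1, _⟩; rw [← h0, h1]
  · rintro rfl; exact ⟨fun _ => μ, rfl, rfl, fun i hi => absurd hi (Nat.not_lt_zero i)⟩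

lemma chain_cons {R : (V → ℝ) → (V → ℝ) → Prop} {μ μ' μ₁ : V → ℝ} {t : ℕ}
    (h : R μ μ') (hc : Chain R μ' t μ₁) : Chain R μ (t + 1) μ₁ := by
  obtain ⟨μs, h0, h1, hs⟩ := hc
  refine ⟨fun i => Nat.casesOn i μ μs, rfl, h1, ?_⟩
  intro i hi
  cases i with
  | zero => simpa [h0] using h
  | succ j => exact hs j (by omega)

lemma chain_uncons {R : (V → ℝ) → (V → ℝ) → Prop} {μ μ₁ : V → ℝ} {t : ℕ}
    (hc : Chain R μ (t + 1) μ₁) : ∃ μ', R μ μ' ∧ Chain R μ' t μ₁ := by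
  obtain ⟨μs, h0, h1, hs⟩ := hc
  exact ⟨μs 1, h0 ▸ hs 0 (Nat.succ_pos t), fun i => μs (i + 1), rfl, h1, fun i hi => hs (i + 1) (by omega)⟩

end Chain

lemma phase1 (G : SimpleGraph V) [G.LocallyFinite] (A : Set V) (p : ℝ) :
    ∀ (t : ℕ) (μ ν ρ μend : V → ℝ),
    (Function.support μ).Finite → (Function.support ν).Finite → (Function.support ρ).Finite →
    (∀ x, 0 ≤ ν x) → (∀ x, 0 ≤ ρ x) → (∀ x, x ∉ A → ρ x = 0) →
    (∀ x ∈ A, μ x ≤ ν x + ρ x) →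
    massOut A μ + ∑' x, ρ x ≤ massOut A ν →
    Chain (fun μa μb => ∃ v m, 0 < m ∧ m ≤ μa v ∧ μb = topple G μa v m) μ t μend →
    p ≤ massOut A μend →
    ∃ t' ≤ t, ∃ νend : V → ℝ,
      Chain (fun μa μb => ∃ v m, v ∈ A ∧ 0 < m ∧ m ≤ μa v ∧ μb = topple G μa v m) ν t' νend
      ∧ p ≤ massOut A νend := by
  intro t
  induction t with
  | zero =>
    intro μ ν ρ μend hμf hνf hρf hν0 hρ0 hρA hdom hf hchain hp
    refine ⟨0, le_refl 0, ν, chain_zero.mpr rfl, ?_⟩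
    have h1 : 0 ≤ ∑' x, ρ x := tsum_nonneg hρ0
    have h2 : μ = μend := chain_zero.mp hchain
    rw [← h2] at hp
    linarith
  | succ t IH =>
    intro μ ν ρ μend hμf hνf hρf hν0 hρ0 hρA hdom hf hchain hp
    obtain ⟨μ', ⟨v, m, hm0, hmv, hμ'⟩, hchain'⟩ := chain_uncons hchain
    have hμ'f : (Function.support μ').Finite := hμ' ▸ topple_support G hμf v m
    have hineq : inw G A v + outw G A v ≤ 1 := inw_add_outw_le_one G A v
    have h0in := inw_nonneg G A v
    have h0out := outw_nonneg G A v
    by_cases hvA : v ∈ A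
    · -- topple min m (ν v) at v in ν
      set m' : ℝ := min m (ν v) with hm'def
      have hm'0 : 0 ≤ m' := le_min hm0.le (hν0 v)
      have hm'le : m' ≤ m := min_le_left _ _
      have hm'ν : m' ≤ ν v := min_le_right _ _
      have hdrop : m - m' ≤ ρ v := by
        rcases min_cases m (ν v) with ⟨he, _⟩ | ⟨he, _⟩
        · rw [hm'def, he]; simpa using hρ0 v
        · rw [hm'def, he]
          have := hdom v hvA
          linarith
      set ν' : V → ℝ := topple G ν v m' with hν'def
      set ρ' : V → ℝ := fun x => ρ x
          + (if G.Adj v x then (if x ∈ A then (m - m') / (G.degree v : ℝ) else 0) else 0)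
          - (if x = v then (m - m') else 0) with hρ'def
      have hν'f : (Function.support ν').Finite := topple_support G hνf v m'
      have hρ'f : (Function.support ρ').Finite := by
        apply Set.Finite.subset (hρf.union (insert v (G.neighborFinset v) : Finset V).finite_toSet)
        intro x hx
        by_contra hc
        simp only [Set.mem_union, Function.mem_support, Finset.coe_insert, Set.mem_insert_iff,
          Finset.mem_coe, SimpleGraph.mem_neighborFinset, not_or] at hc
        obtain ⟨h1, h2, h3⟩ := hc
        simp [hρ'def, h1, h2, h3] at hx
      have hν'0 : ∀ x, 0 ≤ ν' x := by
        rw [hν'def]; exact topple_nonneg G hν0 hm'0 hm'ν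
      have hρ'0 : ∀ x, 0 ≤ ρ' x := by
        intro x
        rcases eq_or_ne x v with rfl | hxv
        · simp [hρ'def, G.irrefl]
          linarith [hρ0 x, hdrop]
        · have h4 : (0:ℝ) ≤ (if G.Adj v x then
              (if x ∈ A then (m - m') / (G.degree v : ℝ) else 0) else 0) := by
            have hnum : (0:ℝ) ≤ m - m' := by linarith
            split
            · split
              · positivity
              · exact le_refl 0
            · exact le_refl 0
          simp only [hρ'def, if_neg hxv]
          have := hρ0 x
          linarith
      have hρ'A : ∀ x, x ∉ A → ρ' x = 0 := by
        intro x hx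
        have hxv : x ≠ v := fun h => hx (h ▸ hvA)
        simp [hρ'def, hxv, hx, hρA x hx]
      have hdom' : ∀ x ∈ A, μ' x ≤ ν' x + ρ' x := by
        intro x hx
        rw [hμ', hν'def, topple_eq_add, topple_eq_add]
        rcases eq_or_ne x v with rfl | hxv
        · simp [hρ'def, eW, G.irrefl]
          have := hdom x hx
          linarith
        · simp only [hρ'def, eW, if_neg hxv, sub_zero]
          by_cases hadj : G.Adj v x
          · simp only [hadj, if_true, if_pos hx]
            have := hdom x hx
            rw [div_eq_mul_inv]
            ring_nf
            linarith
          · simp only [hadj, if_false]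
            have := hdom x hx
            ring_nf
            linarith
      have htot : ∑' x, ρ' x = (∑' x, ρ x) + ((m - m') * inw G A v - (m - m')) := by
        rw [hρ'def]
        exact tot_update G A hρf v _ _
      have hf' : massOut A μ' + ∑' x, ρ' x ≤ massOut A ν' := by
        rw [hμ', hν'def, massOut_topple G A hμf v m, massOut_topple G A hνf v m',
          if_pos hvA, if_pos hvA, htot]
        nlinarith [hf, mul_nonneg (sub_nonneg.mpr hm'le) (sub_nonneg.mpr hineq)]
      obtain ⟨t', ht', νend, hchF, hpend⟩ :=
        IH μ' ν' ρ' μend hμ'f hν'f hρ'f hν'0 hρ'0 hρ'A hdom' hf' hchain' hp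
      by_cases hν : 0 < ν v
      · exact ⟨t' + 1, Nat.succ_le_succ ht', νend,
          chain_cons ⟨v, m', hvA, lt_min hm0 hν, hm'ν, hν'def⟩ hchF, hpend⟩
      · have hν0v : ν v = 0 := le_antisymm (not_lt.mp hν) (hν0 v)
        have hm'eq : m' = 0 := by rw [hm'def, hν0v]; exact min_eq_right hm0.le
        have hnn : ν' = ν := by rw [hν'def, hm'eq, topple_zero]
        rw [hnn] at hchF
        exact ⟨t', ht'.trans (Nat.le_succ t), νend, hchF, hpend⟩
    · -- v ∉ A : skip the toppling in ν
      set ρ' : V → ℝ := fun x => ρ x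
          + (if G.Adj v x then (if x ∈ A then m / (G.degree v : ℝ) else 0) else 0)
          - (if x = v then (0:ℝ) else 0) with hρ'def
      have hρ'f : (Function.support ρ').Finite := by
        apply Set.Finite.subset (hρf.union (insert v (G.neighborFinset v) : Finset V).finite_toSet)
        intro x hx
        by_contra hc
        simp only [Set.mem_union, Function.mem_support, Finset.coe_insert, Set.mem_insert_iff,
          Finset.mem_coe, SimpleGraph.mem_neighborFinset, not_or] at hc
        obtain ⟨h1, h2, h3⟩ := hc
        simp [hρ'def, h1, h2, h3] at hx
      have hρ'0 : ∀ x, 0 ≤ ρ' x := by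
        intro x
        have h4 : (0:ℝ) ≤ (if G.Adj v x then
            (if x ∈ A then m / (G.degree v : ℝ) else 0) else 0) := by
          split
          · split
            · positivity
            · exact le_refl 0
          · exact le_refl 0
        simp only [hρ'def, ite_self, sub_zero]
        have := hρ0 x
        linarith
      have hρ'A : ∀ x, x ∉ A → ρ' x = 0 := by
        intro x hx
        simp [hρ'def, hx, hρA x hx]
      have hdom' : ∀ x ∈ A, μ' x ≤ ν x + ρ' x := by
        intro x hx
        have hxv : x ≠ v := fun h => hvA (h ▸ hx)
        rw [hμ', topple_eq_add]
        simp only [hρ'def, eW, if_neg hxv, ite_self, sub_zero]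
        by_cases hadj : G.Adj v x
        · simp only [hadj, if_true, if_pos hx]
          have := hdom x hx
          rw [div_eq_mul_inv]
          ring_nf
          linarith
        · simp only [hadj, if_false]
          have := hdom x hx
          ring_nf
          linarith
      have htot : ∑' x, ρ' x = (∑' x, ρ x) + (m * inw G A v - 0) := by
        rw [hρ'def]
        exact tot_update G A hρf v _ _
      have hf' : massOut A μ' + ∑' x, ρ' x ≤ massOut A ν := by
        rw [hμ', massOut_topple G A hμf v m, if_neg hvA, htot]
        nlinarith [hf, mul_nonneg hm0.le (sub_nonneg.mpr hineq)]
      obtain ⟨t', ht', νend, hchF, hpend⟩ :=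
        IH μ' ν ρ' μend hμ'f hνf hρ'f hν0 hρ'0 hρ'A hdom' hf' hchain' hp
      exact ⟨t', ht'.trans (Nat.le_succ t), νend, hchF, hpend⟩

lemma phase2 (G : SimpleGraph V) [G.LocallyFinite] (A : Set V) (p : ℝ) :
    ∀ (t : ℕ) (μ ν c μend : V → ℝ),
    (Function.support μ).Finite → (Function.support ν).Finite → (Function.support c).Finite →
    (∀ x, 0 ≤ ν x) → (∀ x, 0 ≤ c x) → (∀ x, x ∉ A → c x = 0) →
    (∀ u, ν u = μ u + ((∑ x ∈ G.neighborFinset u, c x / (G.degree x : ℝ)) - c u)) →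
    Chain (fun μa μb => ∃ v m, v ∈ A ∧ 0 < m ∧ m ≤ μa v ∧ μb = topple G μa v m) μ t μend →
    p ≤ massOut A μend →
    ∃ t' ≤ t, ∃ νend : V → ℝ,
      Chain (fun μa μb => ∃ v, 0 < μa v ∧ μb = topple G μa v (μa v)) ν t' νend
      ∧ p ≤ massOut A νend := by
  intro t
  induction t with
  | zero =>
    intro μ ν c μend hμf hνf hcf hν0 hc0 hcA hrel hchain hp
    refine ⟨0, le_refl 0, ν, chain_zero.mpr rfl, ?_⟩
    rw [← chain_zero.mp hchain] at hp
    have hsle : massOut A μ ≤ massOut A ν := by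
      set s : Finset V := hμf.toFinset ∪ hνf.toFinset with hsdef
      have h0μ : ∀ u ∉ s, μ u = 0 := by
        intro u hu; by_contra hcon; exact hu (by simp [hsdef, Function.mem_support, hcon])
      have h0ν : ∀ u ∉ s, ν u = 0 := by
        intro u hu; by_contra hcon; exact hu (by simp [hsdef, Function.mem_support, hcon])
      rw [massOut_eq_sum A h0μ, massOut_eq_sum A h0ν]
      refine Finset.sum_le_sum fun u _ => ?_
      by_cases h : u ∈ A
      · simp [h]
      · simp only [h, if_false]
        have h1 := hrel u
        have h2 : c u = 0 := hcA u h
        have h3 : 0 ≤ ∑ x ∈ G.neighborFinset u, c x / (G.degree x : ℝ) :=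
          Finset.sum_nonneg fun x _ => div_nonneg (hc0 x) (Nat.cast_nonneg _)
        rw [h1, h2]
        linarith
    linarith
  | succ t IH =>
    intro μ ν c μend hμf hνf hcf hν0 hc0 hcA hrel hchain hp
    obtain ⟨μ', ⟨v, m, hvA, hm0, hmv, hμ'⟩, hchain'⟩ := chain_uncons hchain
    have hμ'f : (Function.support μ').Finite := hμ' ▸ topple_support G hμf v m
    set c' : V → ℝ := fun x => if x = v then c v + (ν v - m) else c x with hc'def
    have hS : 0 ≤ ∑ x ∈ G.neighborFinset v, c x / (G.degree x : ℝ) :=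
      Finset.sum_nonneg fun x _ => div_nonneg (hc0 x) (Nat.cast_nonneg _)
    have hrelv := hrel v
    have hc'0 : ∀ x, 0 ≤ c' x := by
      intro x
      rcases eq_or_ne x v with rfl | hxv
      · simp only [hc'def, if_pos rfl]
        linarith [hrelv, hS, hmv]
      · simp [hc'def, hxv, hc0 x]
    have hc'A : ∀ x, x ∉ A → c' x = 0 := by
      intro x hx
      have hxv : x ≠ v := fun h => hx (h ▸ hvA)
      simp [hc'def, hxv, hcA x hx]
    have hc'f : (Function.support c').Finite := by
      apply Set.Finite.subset (hcf.insert v)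
      intro x hx
      rcases eq_or_ne x v with rfl | hxv
      · exact Set.mem_insert _ _
      · simp only [hc'def, Function.mem_support, if_neg hxv] at hx
        exact Set.mem_insert_of_mem _ hx
    have hrel' : ∀ u, (topple G ν v (ν v)) u = (topple G μ v m) u
        + ((∑ x ∈ G.neighborFinset u, c' x / (G.degree x : ℝ)) - c' u) := by
      intro u
      have hL := L_update G c v (ν v - m) u
      rw [topple_eq_add, topple_eq_add]
      simp only [hc'def]
      rw [hL, hrel u]
      ring
    rcases lt_or_ge 0 (ν v) with hν | hν
    · have hν'f := topple_support G hνf v (ν v)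
      have hν'0 := topple_nonneg G hν0 (hν0 v) (le_refl (ν v))
      obtain ⟨t', ht', νend, hchF, hpend⟩ := IH μ' (topple G ν v (ν v)) c' μend hμ'f hν'f
        hc'f hν'0 hc'0 hc'A (fun u => by rw [hμ']; exact hrel' u) hchain' hp
      exact ⟨t' + 1, Nat.succ_le_succ ht', νend, chain_cons ⟨v, hν, rfl⟩ hchF, hpend⟩
    · have hν0v : ν v = 0 := le_antisymm hν (hν0 v)
      have heq : topple G ν v (ν v) = ν := by rw [hν0v, topple_zero]
      obtain ⟨t', ht', νend, hchF, hpend⟩ := IH μ' ν c' μend hμ'f hνf hc'f hν0 hc'0 hc'A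
        (fun u => by have h := hrel' u; rw [heq] at h; rw [hμ']; exact h) hchain' hp
      exact ⟨t', ht'.trans (Nat.le_succ t), νend, hchF, hpend⟩


/-- **Full topplings suffice** (Florescu–Peres–Rácz, Corollary 3.3).
Restricting every toppling move to topple all of the mass at the chosen vertex does not change
the minimum number of toppling moves needed to transport mass `p` outside of `A`. -/
theorem minTopples_eq_minTopplesFull {V : Type*} (G : SimpleGraph V) [G.LocallyFinite]
    (A : Set V) (p : ℝ) (hp : 0 < p) (μ₀ : V → ℝ) (hμ : IsMassDist μ₀) :
    minTopples G A p μ₀ = minTopplesFull G A p μ₀ := by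
  rw [minTopples, minTopplesFull]
  apply le_antisymm
  · apply sInf_le_sInf
    rintro n ⟨t, rfl, μs, h0, hstep, hple⟩
    exact ⟨t, rfl, μs t, ⟨μs, h0, rfl, fun i hi => by
      obtain ⟨v, hv, he⟩ := hstep i hi
      exact ⟨v, μs i v, hv, le_refl _, he⟩⟩, hple⟩
  · apply le_sInf
    rintro n ⟨t, rfl, μ₁, hseq, hple⟩
    have hchain : Chain (fun μa μb => ∃ v m, 0 < m ∧ m ≤ μa v ∧ μb = topple G μa v m)
        μ₀ t μ₁ := hseq
    have hz : (Function.support (fun _ : V => (0:ℝ))).Finite := by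
      simp [Function.support]
    obtain ⟨t1, ht1, ν1, hch1, hp1⟩ := phase1 G A p t μ₀ μ₀ (fun _ => 0) μ₁ hμ.2 hμ.2 hz
      hμ.1 (fun _ => le_refl 0) (fun _ _ => rfl) (fun x _ => by simp) (by simp) hchain hple
    obtain ⟨t2, ht2, ν2, hch2, hp2⟩ := phase2 G A p t1 μ₀ μ₀ (fun _ => 0) ν1 hμ.2 hμ.2 hz
      hμ.1 (fun _ => le_refl 0) (fun _ _ => rfl) (fun u => by simp) hch1 hp1
    obtain ⟨μs, h0, hT, hstep⟩ := hch2
    calc sInf {n : ℕ∞ | ∃ t : ℕ, n = (t : ℕ∞) ∧ CanTransportFull G A p μ₀ t}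
        ≤ (t2 : ℕ∞) := sInf_le ⟨t2, rfl, μs, h0, fun i hi => hstep i hi, by rw [hT]; exact hp2⟩
      _ ≤ (t : ℕ∞) := by exact_mod_cast ht2.trans ht1

end
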